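/- Let M ∈ ℝ^{T×T} be symmetric positive semidefinite and λ > 0. For any symmetric matrix E with Frobenius norm ‖E‖_F such that I + M/λ + E/λ is positive definite, we have log det(I + M/λ + E/λ) ≤ log det(I + M/λ) + √T · ‖E‖_F / λ. -/

import Mathlib

open scoped Matrix
open scoped MatrixOrder

open Matrix in
lemma aux_diag_nonneg {n : Type*} [Fintype n] [DecidableEq n] {P : Matrix n n ℝ}
    (hP : P.PosSemidef) (i : n) : 0 ≤ P i i := by
  have := hP.dotProduct_mulVec_nonneg (Pi.single i 1)
  simpa [dotProduct, Matrix.mulVec, Pi.single_apply] using this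

open Matrix in
lemma aux_trace_nonneg {n : Type*} [Fintype n] [DecidableEq n] {P : Matrix n n ℝ}
    (hP : P.PosSemidef) : 0 ≤ P.trace := by
  exact Finset.sum_nonneg fun i _ => aux_diag_nonneg hP i

open Matrix in
lemma aux_trace_eq_sum_eig {n : Type*} [Fintype n] [DecidableEq n] {C : Matrix n n ℝ}
    (hC : C.IsHermitian) : C.trace = ∑ i, hC.eigenvalues i := by
  simpa using hC.trace_eq_sum_eigenvalues

open Matrix in
lemma aux_log_det_le {n : Type*} [Fintype n] [DecidableEq n] {C : Matrix n n ℝ}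
    (hC : C.PosDef) : Real.log C.det ≤ C.trace - Fintype.card n := by
  have hdet : C.det = ∏ i, hC.1.eigenvalues i := by
    simpa using hC.1.det_eq_prod_eigenvalues
  rw [hdet, Real.log_prod (fun i _ => (hC.eigenvalues_pos i).ne'),
    aux_trace_eq_sum_eig hC.1]
  have : ∀ i ∈ Finset.univ, Real.log (hC.1.eigenvalues i) ≤ hC.1.eigenvalues i - 1 :=
    fun i _ => Real.log_le_sub_one_of_pos (hC.eigenvalues_pos i)
  calc ∑ i, Real.log (hC.1.eigenvalues i) ≤ ∑ i, (hC.1.eigenvalues i - 1) :=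
        Finset.sum_le_sum this
    _ = (∑ i, hC.1.eigenvalues i) - Fintype.card n := by
        rw [Finset.sum_sub_distrib]; simp [Finset.card_univ]

theorem stmt_11 (T : ℕ) (M E : Matrix (Fin T) (Fin T) ℝ)
    (hM : M.PosSemidef) (lam : ℝ) (hlam : 0 < lam)
    (hE : E.IsSymm)
    (hpd : ((1 : Matrix (Fin T) (Fin T) ℝ) + lam⁻¹ • M + lam⁻¹ • E).PosDef) :
    Real.log ((1 : Matrix (Fin T) (Fin T) ℝ) + lam⁻¹ • M + lam⁻¹ • E).det ≤
      Real.log ((1 : Matrix (Fin T) (Fin T) ℝ) + lam⁻¹ • M).det +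
        Real.sqrt T * Real.sqrt (∑ i, ∑ j, (E i j) ^ 2) / lam := by
  set A : Matrix (Fin T) (Fin T) ℝ := 1 + lam⁻¹ • M with hA_def
  set B : Matrix (Fin T) (Fin T) ℝ := A + lam⁻¹ • E with hB_def
  -- basic positivity facts
  have hMl : (lam⁻¹ • M).PosSemidef := by
    refine Matrix.PosSemidef.of_dotProduct_mulVec_nonneg (by rw [Matrix.IsHermitian, Matrix.conjTranspose_smul, hM.1.eq, star_trivial]) fun x => ?_
    rw [Matrix.smul_mulVec, dotProduct_smul]
    exact mul_nonneg (inv_nonneg.2 hlam.le) (hM.dotProduct_mulVec_nonneg x)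
  have hApd : A.PosDef := Matrix.PosDef.add_posSemidef Matrix.PosDef.one hMl
  have hAdet : IsUnit A.det := hApd.det_pos.ne'.isUnit
  -- square root of A
  set S : Matrix (Fin T) (Fin T) ℝ := CFC.sqrt A with hS_def
  have hSps : S.PosSemidef := Matrix.nonneg_iff_posSemidef.mp (CFC.sqrt_nonneg A)
  have hSS : S * S = A := CFC.sqrt_mul_sqrt_self A hApd.posSemidef.nonneg
  have hSdet : IsUnit S.det := by
    have h : S.det * S.det = A.det := by rw [← Matrix.det_mul, hSS]
    rcases mul_ne_zero_iff.1 (h ▸ hApd.det_pos.ne') with ⟨h1, _⟩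
    exact h1.isUnit
  have hSiS : S⁻¹ * S = 1 := Matrix.nonsing_inv_mul S hSdet
  have hSSi : S * S⁻¹ = 1 := Matrix.mul_nonsing_inv S hSdet
  have hSinvH : S⁻¹.IsHermitian := hSps.1.inv
  have hSinvT : (S⁻¹)ᵀ = S⁻¹ := by
    rw [← Matrix.conjTranspose_eq_transpose_of_trivial, hSinvH.eq]
  have hAinv : A⁻¹ = S⁻¹ * S⁻¹ := by rw [← hSS, Matrix.mul_inv_rev]
  set C : Matrix (Fin T) (Fin T) ℝ := S⁻¹ * B * S⁻¹ with hC_def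
  have hCpd : C.PosDef := by
    refine Matrix.PosDef.of_dotProduct_mulVec_pos ?_ ?_
    · have := hpd.1
      calc Cᴴ = (S⁻¹)ᴴ * Bᴴ * (S⁻¹)ᴴ := by
            rw [hC_def, Matrix.conjTranspose_mul, Matrix.conjTranspose_mul,
              Matrix.mul_assoc]
        _ = C := by rw [hSinvH.eq, hpd.1.eq, hC_def]
    · intro x hx
      have hy : S⁻¹ *ᵥ x ≠ 0 := by
        intro h
        apply hx
        have : S *ᵥ (S⁻¹ *ᵥ x) = x := by
          rw [Matrix.mulVec_mulVec, hSSi, Matrix.one_mulVec]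
        rw [h, Matrix.mulVec_zero] at this
        exact this.symm
      have h1 : star x ⬝ᵥ (C *ᵥ x) =
          star (S⁻¹ *ᵥ x) ⬝ᵥ (B *ᵥ (S⁻¹ *ᵥ x)) := by
        rw [hC_def, ← Matrix.mulVec_mulVec, ← Matrix.mulVec_mulVec,
          Matrix.dotProduct_mulVec]
        congr 1
        simp only [star_trivial]
        rw [← hSinvT, Matrix.vecMul_transpose, hSinvT]
      rw [h1]
      exact hpd.dotProduct_mulVec_pos hy
  -- determinant identity : B.det = A.det * C.det
  have hB_eq : S * C * S = B := by
    calc S * (S⁻¹ * B * S⁻¹) * S = S * S⁻¹ * B * (S⁻¹ * S) := by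
          simp only [Matrix.mul_assoc]
      _ = B := by rw [hSSi, hSiS, Matrix.one_mul, Matrix.mul_one]
  have hdetSS : S.det * S.det = A.det := by rw [← Matrix.det_mul, hSS]
  have hdetB : B.det = A.det * C.det := by
    calc B.det = (S * C * S).det := by rw [hB_eq]
      _ = S.det * C.det * S.det := by rw [Matrix.det_mul, Matrix.det_mul]
      _ = A.det * C.det := by rw [← hdetSS]; ring
  have hlog : Real.log B.det = Real.log A.det + Real.log C.det := by
    rw [hdetB, Real.log_mul hApd.det_pos.ne' hCpd.det_pos.ne']
  -- trace identity : C.trace = T + lam⁻¹ * (A⁻¹ * E).trace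
  have htraceC : C.trace = (T : ℝ) + lam⁻¹ * (A⁻¹ * E).trace := by
    have h1 : C.trace = (A⁻¹ * B).trace := by
      rw [hC_def, Matrix.trace_mul_cycle, ← hAinv]
    have h2 : A⁻¹ * B = 1 + lam⁻¹ • (A⁻¹ * E) := by
      rw [hB_def, Matrix.mul_add, Matrix.mul_smul, Matrix.nonsing_inv_mul A hAdet]
    rw [h1, h2, Matrix.trace_add, Matrix.trace_smul, Matrix.trace_one]
    simp [smul_eq_mul]
  have hkey : Real.log B.det ≤ Real.log A.det + lam⁻¹ * (A⁻¹ * E).trace := by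
    have := aux_log_det_le hCpd
    rw [htraceC] at this
    simp only [Fintype.card_fin] at this
    linarith [hlog]
  -- 1 - A⁻¹ is PSD
  have hKpd : A⁻¹.PosDef := hApd.inv
  have h1K_eq : (S⁻¹)ᴴ * (lam⁻¹ • M) * S⁻¹ = 1 - A⁻¹ := by
    have hMA : lam⁻¹ • M = A - 1 := by rw [hA_def, add_sub_cancel_left]
    have hSAS : S⁻¹ * A * S⁻¹ = 1 := by
      rw [← hSS, ← Matrix.mul_assoc, hSiS, Matrix.one_mul, hSSi]
    rw [hSinvH.eq, hMA, Matrix.mul_sub, Matrix.mul_one, Matrix.sub_mul, hSAS, hAinv]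
  have h1Kpsd : ((1 : Matrix (Fin T) (Fin T) ℝ) - A⁻¹).PosSemidef :=
    h1K_eq ▸ hMl.conjTranspose_mul_mul_same S⁻¹
  -- trace of A⁻¹ is at most T
  have htrK : (A⁻¹).trace ≤ (T : ℝ) := by
    have hdiag : ∀ i, A⁻¹ i i ≤ 1 := by
      intro i
      have := aux_diag_nonneg h1Kpsd i
      simp only [Matrix.sub_apply, Matrix.one_apply_eq] at this
      linarith
    calc (A⁻¹).trace = ∑ i, A⁻¹ i i := rfl
      _ ≤ ∑ _i : Fin T, (1 : ℝ) := Finset.sum_le_sum fun i _ => hdiag i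
      _ = (T : ℝ) := by simp
  -- trace of A⁻¹ * A⁻¹ is at most trace of A⁻¹
  have hKK : (A⁻¹ * A⁻¹).trace ≤ (A⁻¹).trace := by
    set R : Matrix (Fin T) (Fin T) ℝ := CFC.sqrt A⁻¹ with hR_def
    have hRps : R.PosSemidef := Matrix.nonneg_iff_posSemidef.mp (CFC.sqrt_nonneg A⁻¹)
    have hRR : R * R = A⁻¹ := CFC.sqrt_mul_sqrt_self A⁻¹ hKpd.posSemidef.nonneg
    have hconj : Rᴴ * ((1 : Matrix (Fin T) (Fin T) ℝ) - A⁻¹) * R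
        = A⁻¹ - A⁻¹ * A⁻¹ := by
      have h2 : R * A⁻¹ * R = A⁻¹ * A⁻¹ := by
        rw [← hRR]; simp only [Matrix.mul_assoc]
      rw [hRps.1.eq, Matrix.mul_sub, Matrix.sub_mul, Matrix.mul_one, hRR, h2]
    have := aux_trace_nonneg (h1Kpsd.conjTranspose_mul_mul_same R)
    rw [hconj, Matrix.trace_sub] at this
    linarith
  -- Frobenius norm of A⁻¹ squared is at most T
  have hsumK : ∑ i, ∑ j, (A⁻¹ i j) ^ 2 ≤ (T : ℝ) := by
    have h1 : (A⁻¹ * A⁻¹).trace = ∑ i, ∑ j, (A⁻¹ i j) ^ 2 := by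
      simp only [Matrix.trace, Matrix.diag, Matrix.mul_apply]
      refine Finset.sum_congr rfl fun i _ => Finset.sum_congr rfl fun j _ => ?_
      have hsym : A⁻¹ j i = A⁻¹ i j := by
        have := hKpd.1.apply i j
        simpa using this
      rw [hsym]; ring
    linarith
  -- Cauchy-Schwarz
  have htrKE : (A⁻¹ * E).trace = ∑ i, ∑ j, A⁻¹ i j * E i j := by
    simp only [Matrix.trace, Matrix.diag, Matrix.mul_apply]
    exact Finset.sum_congr rfl fun i _ => Finset.sum_congr rfl fun j _ => by
      rw [hE.apply i j]
  have hEsq : (0:ℝ) ≤ ∑ i, ∑ j, (E i j) ^ 2 :=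
    Finset.sum_nonneg fun i _ => Finset.sum_nonneg fun j _ => sq_nonneg _
  have hKsq : (0:ℝ) ≤ ∑ i, ∑ j, (A⁻¹ i j) ^ 2 :=
    Finset.sum_nonneg fun i _ => Finset.sum_nonneg fun j _ => sq_nonneg _
  have hCS : (A⁻¹ * E).trace ≤
      Real.sqrt T * Real.sqrt (∑ i, ∑ j, (E i j) ^ 2) := by
    rw [htrKE]
    have hCS2 : (∑ i, ∑ j, A⁻¹ i j * E i j) ^ 2 ≤
        (∑ i, ∑ j, (A⁻¹ i j) ^ 2) * (∑ i, ∑ j, (E i j) ^ 2) := by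
      have := Finset.sum_mul_sq_le_sq_mul_sq Finset.univ
        (fun p : Fin T × Fin T => A⁻¹ p.1 p.2) (fun p : Fin T × Fin T => E p.1 p.2)
      simpa only [Fintype.sum_prod_type] using this
    calc ∑ i, ∑ j, A⁻¹ i j * E i j
        ≤ |∑ i, ∑ j, A⁻¹ i j * E i j| := le_abs_self _
      _ = Real.sqrt ((∑ i, ∑ j, A⁻¹ i j * E i j) ^ 2) := (Real.sqrt_sq_eq_abs _).symm
      _ ≤ Real.sqrt ((∑ i, ∑ j, (A⁻¹ i j) ^ 2) * (∑ i, ∑ j, (E i j) ^ 2)) :=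
          Real.sqrt_le_sqrt hCS2
      _ = Real.sqrt (∑ i, ∑ j, (A⁻¹ i j) ^ 2) * Real.sqrt (∑ i, ∑ j, (E i j) ^ 2) :=
          Real.sqrt_mul hKsq _
      _ ≤ Real.sqrt T * Real.sqrt (∑ i, ∑ j, (E i j) ^ 2) := by gcongr
  -- combine
  have hfin : lam⁻¹ * (A⁻¹ * E).trace ≤
      lam⁻¹ * (Real.sqrt T * Real.sqrt (∑ i, ∑ j, (E i j) ^ 2)) :=
    mul_le_mul_of_nonneg_left hCS (inv_nonneg.2 hlam.le)
  have hrw : lam⁻¹ * (Real.sqrt T * Real.sqrt (∑ i, ∑ j, (E i j) ^ 2)) =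
      Real.sqrt T * Real.sqrt (∑ i, ∑ j, (E i j) ^ 2) / lam := by
    field_simp
  linarith [hkey]
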